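/- (Upper bound on RLL redundancy via the Lovász local lemma.) Let Q > R ≥ 1, ℓ ≥ 1, and n ≥ ℓ be integers, Σ a finite alphabet with |Σ| = Q, and Σ' ⊆ Σ with |Σ'| = R. Set π₁ = (R/Q)^ℓ and π = (R/Q)^ℓ·(1 − R/Q). If e·((2ℓ+2)·π + π₁) ≤ 1 and e·((ℓ−1)·π + π₁) ≤ 1, then |RLL_{Q,R}(ℓ,n)| ≥ Q^n · exp(−e·(π₁ + (n−ℓ)·π)), and consequently the redundancy satisfies red(RLL_{Q,R}(ℓ,n)) ≤ e·log_Q(e)·(R/Q)^ℓ·(1 + (1 − R/Q)·(n−ℓ)). -/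

import Mathlib

open Finset Real

/-- A sequence `x ∈ Σⁿ` is `ℓ`-run-length-limited if every window of `ℓ`
consecutive symbols contains at least one symbol outside `S'`. -/
def IsRLL {σ : Type*} (S' : Finset σ) (ℓ : ℕ) {n : ℕ} (x : Fin n → σ) : Prop :=
  ∀ i : ℕ, (h : i + ℓ ≤ n) → ∃ k : ℕ, ∃ hk : k < ℓ, x ⟨i + k, by omega⟩ ∉ S'

namespace RLLthm

set_option linter.unusedSectionVars false

variable {σ : Type*} [Fintype σ] (S' : Finset σ) (ℓ : ℕ)

lemma fin_congr {m : ℕ} (x : Fin m → σ) {a b : ℕ} (ha : a < m) (hb : b < m) (h : a = b) :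
    x ⟨a, ha⟩ = x ⟨b, hb⟩ := by subst h; rfl

lemma init_val {m : ℕ} (x : Fin (m+1) → σ) (a : ℕ) (ha : a < m) :
    Fin.init x ⟨a, ha⟩ = x ⟨a, by omega⟩ := rfl

lemma isRLL_mono {m m' : ℕ} (h : m ≤ m') {x : Fin m' → σ} (hx : IsRLL S' ℓ x)
    (y : Fin m → σ) (hy : ∀ j : Fin m, y j = x ⟨j.1, lt_of_lt_of_le j.2 h⟩) :
    IsRLL S' ℓ y := by
  intro i hi
  obtain ⟨k, hk, hne⟩ := hx i (by omega)
  refine ⟨k, hk, ?_⟩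
  rw [hy ⟨i + k, by omega⟩]
  exact hne

lemma isRLL_init {m : ℕ} {x : Fin (m+1) → σ} (hx : IsRLL S' ℓ x) :
    IsRLL S' ℓ (Fin.init x) :=
  isRLL_mono S' ℓ (Nat.le_succ m) hx _ (fun _ => rfl)

/-- number of RLL sequences of length `k` -/
noncomputable def NC (k : ℕ) : ℕ := Nat.card {x : Fin k → σ // IsRLL S' ℓ x}

lemma NC_le (k : ℕ) : NC S' ℓ k ≤ Fintype.card σ ^ k := by
  classical
  calc NC S' ℓ k ≤ Nat.card (Fin k → σ) := Finite.card_subtype_le _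
    _ = Fintype.card σ ^ k := by
        simp [Nat.card_eq_fintype_card, Fintype.card_fun]

lemma card_and_split {α : Type*} [Fintype α] (P Q : α → Prop) :
    Nat.card {x // P x ∧ Q x} + Nat.card {x // P x ∧ ¬ Q x} = Nat.card {x // P x} := by
  classical
  rw [Nat.card_eq_fintype_card, Nat.card_eq_fintype_card, Nat.card_eq_fintype_card,
    Fintype.card_subtype, Fintype.card_subtype, Fintype.card_subtype]
  have h := Finset.card_filter_add_card_filter_not (s := Finset.univ.filter P) (p := Q)
  simpa [Finset.filter_filter] using h

lemma card_add_compl (k : ℕ) (P : (Fin k → σ) → Prop) :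
    Nat.card {x : Fin k → σ // P x} + Nat.card {x : Fin k → σ // ¬ P x}
      = Fintype.card σ ^ k := by
  classical
  rw [Nat.card_eq_fintype_card, Nat.card_eq_fintype_card, Fintype.card_subtype,
    Fintype.card_subtype]
  rw [Finset.card_filter_add_card_filter_not]
  simp [Fintype.card_fun]

lemma NC_ell : NC S' ℓ ℓ + S'.card ^ ℓ = Fintype.card σ ^ ℓ := by
  classical
  have hcompl : Nat.card {x : Fin ℓ → σ // ¬ IsRLL S' ℓ x} = S'.card ^ ℓ := by
    have e : {x : Fin ℓ → σ // ¬ IsRLL S' ℓ x} ≃ (Fin ℓ → {a : σ // a ∈ S'}) := by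
      refine ⟨fun x j => ⟨x.1 j, ?_⟩, fun y => ⟨fun j => (y j).1, ?_⟩, ?_, ?_⟩
      · obtain ⟨x, hx⟩ := x
        simp only [IsRLL, not_forall, not_exists] at hx
        obtain ⟨i, hi, hall⟩ := hx
        have hi0 : i = 0 := by omega
        subst hi0
        have hmem := hall j.1 j.2
        simp only [not_not] at hmem
        rwa [fin_congr x _ j.2 (by omega), Fin.eta] at hmem
      · intro hy
        obtain ⟨k, hk, hne⟩ := hy 0 (by omega)
        exact hne (by simpa using (y ⟨0 + k, by omega⟩).2)
      · intro x; apply Subtype.ext; funext j; rfl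
      · intro y; funext j; rfl
    rw [Nat.card_congr e, Nat.card_eq_fintype_card, Fintype.card_fun]
    simp
  have h := card_add_compl ℓ (IsRLL S' ℓ)
  rw [hcompl] at h
  exact h

lemma NC_ext (m : ℕ) :
    Nat.card {x : Fin (m+1) → σ // IsRLL S' ℓ (Fin.init x)}
      = NC S' ℓ m * Fintype.card σ := by
  have e : {x : Fin (m+1) → σ // IsRLL S' ℓ (Fin.init x)}
      ≃ {y : Fin m → σ // IsRLL S' ℓ y} × σ :=
    { toFun := fun x => (⟨Fin.init x.1, x.2⟩, x.1 (Fin.last m))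
      invFun := fun ya => ⟨Fin.snoc ya.1.1 ya.2, by rw [Fin.init_snoc]; exact ya.1.2⟩
      left_inv := fun x => Subtype.ext (Fin.snoc_init_self x.1)
      right_inv := fun ya => by
        obtain ⟨⟨y, hy⟩, a⟩ := ya
        dsimp only
        exact congrArg₂ Prod.mk (Subtype.ext (by simp)) (by simp) }
  rw [Nat.card_congr e, Nat.card_prod, Nat.card_eq_fintype_card (α := σ)]
  rfl

lemma NC_split (m : ℕ) :
    NC S' ℓ (m+1) + Nat.card {x : Fin (m+1) → σ // IsRLL S' ℓ (Fin.init x) ∧ ¬ IsRLL S' ℓ x}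
      = NC S' ℓ m * Fintype.card σ := by
  have e : {x : Fin (m+1) → σ // IsRLL S' ℓ x}
      ≃ {x : Fin (m+1) → σ // IsRLL S' ℓ (Fin.init x) ∧ IsRLL S' ℓ x} :=
    Equiv.subtypeEquivRight (fun x => ⟨fun h => ⟨isRLL_init S' ℓ h, h⟩, And.right⟩)
  rw [NC, Nat.card_congr e, ← NC_ext S' ℓ m]
  exact card_and_split (fun x => IsRLL S' ℓ (Fin.init x)) (IsRLL S' ℓ)

lemma bad_window (t : ℕ) (x : Fin (ℓ+t+1) → σ)
    (hinit : IsRLL S' ℓ (Fin.init x)) (hbad : ¬ IsRLL S' ℓ x) :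
    (∀ j : ℕ, (hj : j < ℓ) → x ⟨t+1+j, by omega⟩ ∈ S') ∧ x ⟨t, by omega⟩ ∉ S' := by
  simp only [IsRLL, not_forall, not_exists] at hbad
  obtain ⟨i, hi, hall⟩ := hbad
  have hit : i = t + 1 := by
    by_contra hne
    have hi' : i + ℓ ≤ ℓ + t := by omega
    obtain ⟨k, hk, hnot⟩ := hinit i hi'
    have hmem := hall k hk
    rw [not_not] at hmem
    exact hnot (by rw [init_val x (i+k) (by omega)]; exact hmem)
  subst hit
  constructor
  · intro j hj
    have hmem := hall j hj
    rw [not_not] at hmem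
    exact hmem
  · obtain ⟨k, hk, hnot⟩ := hinit t (by omega)
    rcases Nat.eq_zero_or_pos k with h0 | h0
    · subst h0
      intro hmem
      exact hnot (by rw [init_val x (t+0) (by omega)]; exact hmem)
    · exfalso
      apply hnot
      have hmem := hall (k-1) (by omega)
      rw [not_not] at hmem
      rw [init_val x (t+k) (by omega),
        fin_congr x (by omega) (by omega) (show t+k = t+1+(k-1) by omega)]
      exact hmem

lemma bad_le (t : ℕ) :
    Nat.card {x : Fin (ℓ+t+1) → σ // IsRLL S' ℓ (Fin.init x) ∧ ¬ IsRLL S' ℓ x}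
      ≤ NC S' ℓ t * ((Fintype.card σ - S'.card) * S'.card ^ ℓ) := by
  classical
  let T := {y : Fin t → σ // IsRLL S' ℓ y} × ({a : σ // ¬ a ∈ S'} × (Fin ℓ → {a : σ // a ∈ S'}))
  have hf : ∀ x : {x : Fin (ℓ+t+1) → σ // IsRLL S' ℓ (Fin.init x) ∧ ¬ IsRLL S' ℓ x},
      IsRLL S' ℓ (fun j : Fin t => x.1 ⟨j.1, by omega⟩) :=
    fun x => isRLL_mono S' ℓ (by omega) x.2.1 _
      (fun j => (init_val x.1 j.1 (by omega)).symm)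
  let f : {x : Fin (ℓ+t+1) → σ // IsRLL S' ℓ (Fin.init x) ∧ ¬ IsRLL S' ℓ x} → T :=
    fun x => ⟨⟨fun j => x.1 ⟨j.1, by omega⟩, hf x⟩,
      ⟨x.1 ⟨t, by omega⟩, (bad_window S' ℓ t x.1 x.2.1 x.2.2).2⟩,
      fun j => ⟨x.1 ⟨t+1+j.1, by omega⟩, (bad_window S' ℓ t x.1 x.2.1 x.2.2).1 j.1 j.2⟩⟩
  have hinj : Function.Injective f := by
    intro x x' hxx
    have hA := congrArg (fun z : T => (z.1.1 : Fin t → σ)) hxx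
    have hB := congrArg (fun z : T => (z.2.1.1 : σ)) hxx
    have hC := congrArg (fun z : T => (fun j : Fin ℓ => ((z.2.2 j).1 : σ))) hxx
    dsimp only [f] at hA hB hC
    apply Subtype.ext
    funext j
    obtain ⟨v, hv⟩ := j
    rcases lt_trichotomy v t with h | h | h
    · exact congrFun hA ⟨v, h⟩
    · subst h
      exact hB
    · have hC' := congrFun hC ⟨v - (t+1), by omega⟩
      dsimp only at hC'
      calc x.1 ⟨v, hv⟩ = x.1 ⟨t+1+(v-(t+1)), by omega⟩ :=
            fin_congr x.1 _ _ (by omega)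
        _ = x'.1 ⟨t+1+(v-(t+1)), by omega⟩ := hC'
        _ = x'.1 ⟨v, hv⟩ := fin_congr x'.1 _ _ (by omega)
  calc Nat.card {x : Fin (ℓ+t+1) → σ // IsRLL S' ℓ (Fin.init x) ∧ ¬ IsRLL S' ℓ x}
      ≤ Nat.card T := Nat.card_le_card_of_injective f hinj
    _ = NC S' ℓ t * ((Fintype.card σ - S'.card) * S'.card ^ ℓ) := by
        rw [Nat.card_prod, Nat.card_prod]
        congr 1
        congr 1
        · rw [Nat.card_eq_fintype_card, Fintype.card_subtype_compl]
          simp [Fintype.card_coe]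
        · rw [Nat.card_eq_fintype_card, Fintype.card_fun]
          simp [Fintype.card_coe]

lemma rll_induction (p p₁ β : ℝ) (F : ℕ → ℝ)
    (hp : 0 < p) (hp₁1 : p₁ ≤ 1) (hp₁0 : 0 ≤ p₁)
    (hβ0 : 0 < β) (hβ1 : β ≤ 1)
    (hkey : p ≤ (1 - β) * (1 - p₁) * β ^ ℓ)
    (hF0 : ∀ k, 0 ≤ F k) (hF1 : ∀ k, F k ≤ 1)
    (hFℓ : F ℓ = 1 - p₁)
    (hrec : ∀ t, F (ℓ + t) - p * F t ≤ F (ℓ + t + 1)) :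
    ∀ t, (1 - p₁) * β ^ t ≤ F (ℓ + t) := by
  have hβℓ : (0:ℝ) ≤ β ^ ℓ := pow_nonneg hβ0.le ℓ
  have h1β : (0:ℝ) ≤ 1 - β := by linarith
  have h1p₁ : (0:ℝ) ≤ 1 - p₁ := by linarith
  have main : ∀ t, ((1 - p₁) * β ^ t ≤ F (ℓ + t)) ∧
      (∀ s, s + 1 ≤ t → β * F (ℓ + s) ≤ F (ℓ + s + 1)) := by
    intro t
    induction t with
    | zero =>
      constructor
      · simp [hFℓ]
      · intro s hs; omega
    | succ t ih =>
      obtain ⟨hprod, hratio⟩ := ih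
      have hratio_new : β * F (ℓ + t) ≤ F (ℓ + t + 1) := by
        have hrec' := hrec t
        have hpf : p * F t ≤ (1 - β) * F (ℓ + t) := by
          rcases le_or_gt t ℓ with hcase | hcase
          · have h1 : p * F t ≤ p := by
              nlinarith [hF1 t, hF0 t]
            have h2 : β ^ ℓ ≤ β ^ t := pow_le_pow_of_le_one hβ0.le hβ1 hcase
            have h3 : (1 - β) * ((1 - p₁) * β ^ t) ≤ (1 - β) * F (ℓ + t) :=
              mul_le_mul_of_nonneg_left hprod h1β
            have h4 := mul_le_mul_of_nonneg_left h2 (mul_nonneg h1β h1p₁)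
            nlinarith
          · have hchain : ∀ j, j ≤ ℓ → β ^ j * F (ℓ + t - j) ≤ F (ℓ + t) := by
              intro j
              induction j with
              | zero => intro _; simpa using hF0 (ℓ + t)
              | succ j ihj =>
                intro hj
                have hstep : β * F (ℓ + (t - j - 1)) ≤ F (ℓ + (t - j - 1) + 1) :=
                  hratio (t - j - 1) (by omega)
                have ih' := ihj (by omega)
                calc β ^ (j+1) * F (ℓ + t - (j+1))
                    = β ^ j * (β * F (ℓ + (t - j - 1))) := by
                      rw [congrArg F (show ℓ + t - (j+1) = ℓ + (t - j - 1) by omega)]; ring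
                  _ ≤ β ^ j * F (ℓ + (t - j - 1) + 1) :=
                      mul_le_mul_of_nonneg_left hstep (pow_nonneg hβ0.le j)
                  _ = β ^ j * F (ℓ + t - j) := by
                      rw [congrArg F (show ℓ + (t - j - 1) + 1 = ℓ + t - j by omega)]
                  _ ≤ F (ℓ + t) := ih'
            have hℓchain : β ^ ℓ * F t ≤ F (ℓ + t) := by
              have h := hchain ℓ le_rfl
              rwa [congrArg F (show ℓ + t - ℓ = t by omega)] at h
            have hk' : p ≤ (1 - β) * β ^ ℓ := by
              nlinarith [mul_nonneg (mul_nonneg h1β hp₁0) hβℓ]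
            have hpt : p * F t ≤ (1 - β) * β ^ ℓ * F t :=
              mul_le_mul_of_nonneg_right hk' (hF0 t)
            nlinarith [mul_le_mul_of_nonneg_left hℓchain h1β]
        linarith
      constructor
      · calc (1 - p₁) * β ^ (t+1) = β * ((1 - p₁) * β ^ t) := by ring
          _ ≤ β * F (ℓ + t) := mul_le_mul_of_nonneg_left hprod hβ0.le
          _ ≤ F (ℓ + t + 1) := hratio_new
      · intro s hs
        rcases Nat.lt_or_ge (s+1) (t+1) with h | h
        · exact hratio s (by omega)
        · have hst : s = t := by omega
          subst hst
          exact hratio_new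
  intro t
  exact (main t).1

set_option maxHeartbeats 1000000 in
lemma key_ineq (hℓ : 1 ≤ ℓ) (p p₁ : ℝ) (hp : 0 < p) (hpp₁ : p ≤ p₁)
    (h1' : Real.exp 1 * ((2*(ℓ:ℝ)+2) * p + p₁) ≤ 1) :
    p ≤ (1 - Real.exp (-(Real.exp 1 * p))) * (1 - p₁) * Real.exp (-(Real.exp 1 * p)) ^ ℓ := by
  set E := Real.exp 1 with hE
  set β := Real.exp (-(E * p)) with hβdef
  set u := E * p₁ with hu
  have hEgt : (2.71 : ℝ) < E := lt_trans (by norm_num) Real.exp_one_gt_d9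
  have hElt : E < 2.72 := lt_trans Real.exp_one_lt_d9 (by norm_num)
  have hℓR : (1:ℝ) ≤ (ℓ:ℝ) := by exact_mod_cast hℓ
  have hEp : 0 < E * p := mul_pos (by linarith) hp
  have hp₁0 : 0 < p₁ := lt_of_lt_of_le hp hpp₁
  have hu0 : 0 < u := mul_pos (by linarith) hp₁0
  have hbig : 0 < E * ((2*(ℓ:ℝ)+2) * p) :=
    mul_pos (by linarith) (mul_pos (by linarith) hp)
  have hu1 : u ≤ 1 := by nlinarith
  have hep : E * p ≤ (1 - u) / 4 := by nlinarith
  have heℓp : (ℓ:ℝ) * (E * p) ≤ (1 - u) / 2 := by nlinarith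
  have hβ0 : 0 < β := Real.exp_pos _
  have hβ1 : β ≤ 1 := Real.exp_le_one_iff.mpr (by linarith)
  have hβmul : β * (1 + E * p) ≤ 1 := by
    have h := Real.add_one_le_exp (E * p)
    calc β * (1 + E * p) ≤ β * Real.exp (E * p) :=
          mul_le_mul_of_nonneg_left (by linarith) hβ0.le
      _ = 1 := by rw [hβdef, ← Real.exp_add]; simp
  have hβℓ : (1 + u) / 2 ≤ β ^ ℓ := by
    have h : β ^ ℓ = Real.exp ((ℓ:ℝ) * (-(E * p))) := by
      rw [Real.exp_nat_mul]
    have h2 := Real.add_one_le_exp ((ℓ:ℝ) * (-(E * p)))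
    rw [h]
    nlinarith
  clear_value E β u
  have hp₁1 : p₁ < 1 := by nlinarith
  have h1p₁ : (0:ℝ) ≤ 1 - p₁ := by linarith
  have h1β : (0:ℝ) ≤ 1 - β := by linarith
  have hA : E * p ≤ (1 - β) * (1 + E * p) := by nlinarith
  have hquad : 2 * (1 + E * p) ≤ (E - u) * (1 + u) := by
    nlinarith [mul_nonneg hu0.le (by linarith : (0:ℝ) ≤ 1 - u)]
  have hnn : (0:ℝ) ≤ (1 - p₁) * ((1 + u) / 2) := by
    apply mul_nonneg h1p₁ (by linarith)
  have ha : E * p * ((1 - p₁) * ((1 + u) / 2))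
      ≤ (1 - β) * (1 + E * p) * ((1 - p₁) * ((1 + u) / 2)) :=
    mul_le_mul_of_nonneg_right hA hnn
  have hb : p * (1 + E * p) ≤ E * p * ((1 - p₁) * ((1 + u) / 2)) := by
    have hc := mul_le_mul_of_nonneg_left hquad hp.le
    rw [hu] at hc ⊢
    linarith [hc]
  have hstep2 : p * (1 + E * p) ≤ (1 - β) * ((1 - p₁) * ((1 + u) / 2)) * (1 + E * p) := by
    nlinarith [ha, hb]
  have hstep3 : p ≤ (1 - β) * ((1 - p₁) * ((1 + u) / 2)) :=
    le_of_mul_le_mul_right hstep2 (by positivity)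
  have hstep1 : (1 - β) * ((1 - p₁) * ((1 + u) / 2)) ≤ (1 - β) * ((1 - p₁) * β ^ ℓ) :=
    mul_le_mul_of_nonneg_left (mul_le_mul_of_nonneg_left hβℓ h1p₁) h1β
  calc p ≤ (1 - β) * ((1 - p₁) * ((1 + u) / 2)) := hstep3
    _ ≤ (1 - β) * ((1 - p₁) * β ^ ℓ) := hstep1
    _ = (1 - β) * (1 - p₁) * β ^ ℓ := by ring

end RLLthm

open RLLthm in
set_option maxHeartbeats 1000000 in
/-- Upper bound on RLL redundancy via the Lovász local lemma. -/
theorem rll_redundancy_upper_bound_lll {σ : Type*} [Fintype σ] (Q R ℓ n : ℕ)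
    (hR : 1 ≤ R) (hQR : R < Q) (hℓ : 1 ≤ ℓ) (hn : ℓ ≤ n)
    (hσ : Fintype.card σ = Q) (S' : Finset σ) (hS' : S'.card = R)
    (p₁ p : ℝ)
    (hp₁ : p₁ = ((R : ℝ) / Q) ^ ℓ)
    (hp : p = ((R : ℝ) / Q) ^ ℓ * (1 - (R : ℝ) / Q))
    (h1 : Real.exp 1 * ((2 * (ℓ : ℝ) + 2) * p + p₁) ≤ 1)
    (h2 : Real.exp 1 * (((ℓ : ℝ) - 1) * p + p₁) ≤ 1) :
    (Q : ℝ) ^ n * Real.exp (-(Real.exp 1) * (p₁ + ((n : ℝ) - (ℓ : ℝ)) * p)) ≤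
        ({x : Fin n → σ | IsRLL S' ℓ x}.ncard : ℝ) ∧
      (n : ℝ) - Real.logb Q ({x : Fin n → σ | IsRLL S' ℓ x}.ncard) ≤
        Real.exp 1 * Real.logb Q (Real.exp 1) * ((R : ℝ) / Q) ^ ℓ *
          (1 + (1 - (R : ℝ) / Q) * ((n : ℝ) - (ℓ : ℝ))) := by
  classical
  have hQ2 : 2 ≤ Q := by omega
  have hQR' : (0:ℝ) < (Q:ℝ) := by exact_mod_cast Nat.lt_of_lt_of_le (by norm_num) hQ2
  have hQ1 : (1:ℝ) < (Q:ℝ) := by exact_mod_cast (by omega : 1 < Q)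
  have hr0 : 0 < (R:ℝ)/Q := div_pos (by exact_mod_cast hR) hQR'
  have hr1 : (R:ℝ)/Q < 1 := (div_lt_one hQR').mpr (by exact_mod_cast hQR)
  have hℓR : (1:ℝ) ≤ (ℓ:ℝ) := by exact_mod_cast hℓ
  have hE0 : (0:ℝ) < Real.exp 1 := Real.exp_pos 1
  have hEgt : (2.71:ℝ) < Real.exp 1 := lt_trans (by norm_num) Real.exp_one_gt_d9
  have hrpow : 0 < ((R:ℝ)/Q) ^ ℓ := pow_pos hr0 ℓ
  have hp₁0 : 0 < p₁ := by rw [hp₁]; exact hrpow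
  have hp0 : 0 < p := by rw [hp]; exact mul_pos hrpow (by linarith)
  have hpp₁ : p ≤ p₁ := by rw [hp, hp₁]; nlinarith
  have hp₁1 : p₁ ≤ 1 := by
    rw [hp₁]; exact pow_le_one₀ hr0.le hr1.le
  have hkey := key_ineq ℓ hℓ p p₁ hp0 hpp₁ h1
  have hEp₁ : Real.exp 1 * p₁ ≤ 1 := by
    nlinarith [mul_nonneg (mul_nonneg hE0.le (by linarith : (0:ℝ) ≤ (ℓ:ℝ) - 1)) hp0.le]
  -- the normalized counting function
  set F : ℕ → ℝ := fun k => ((NC S' ℓ k : ℝ) / (Q:ℝ)^k) with hF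
  have hQpow : ∀ k : ℕ, (0:ℝ) < (Q:ℝ)^k := fun k => pow_pos hQR' k
  have hF0 : ∀ k, 0 ≤ F k := fun k => div_nonneg (Nat.cast_nonneg _) (hQpow k).le
  have hNCle : ∀ k, (NC S' ℓ k : ℝ) ≤ (Q:ℝ)^k := by
    intro k
    have h := NC_le S' ℓ k
    rw [hσ] at h
    calc (NC S' ℓ k : ℝ) ≤ ((Q^k : ℕ):ℝ) := by exact_mod_cast h
      _ = (Q:ℝ)^k := by push_cast; ring
  have hF1 : ∀ k, F k ≤ 1 := fun k => (div_le_one (hQpow k)).mpr (hNCle k)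
  have hFell : F ℓ = 1 - p₁ := by
    have h := NC_ell S' ℓ
    rw [hσ, hS'] at h
    have hc : (NC S' ℓ ℓ : ℝ) + (R:ℝ)^ℓ = (Q:ℝ)^ℓ := by exact_mod_cast h
    rw [hF]
    dsimp only
    rw [hp₁, div_pow, eq_sub_iff_add_eq, ← add_div, div_eq_one_iff_eq (hQpow ℓ).ne']
    exact hc
  have hrec : ∀ t, F (ℓ + t) - p * F t ≤ F (ℓ + t + 1) := by
    intro t
    have hsplit := NC_split S' ℓ (ℓ + t)
    have hbadle := bad_le S' ℓ t
    rw [hσ] at hsplit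
    rw [hσ, hS'] at hbadle
    have hC : (NC S' ℓ (ℓ+t) : ℝ) * Q - (NC S' ℓ t : ℝ) * (((Q:ℝ) - R) * (R:ℝ)^ℓ)
        ≤ (NC S' ℓ (ℓ+t+1) : ℝ) := by
      have h1c : (NC S' ℓ (ℓ+t+1) : ℝ)
          + (Nat.card {x : Fin (ℓ+t+1) → σ // IsRLL S' ℓ (Fin.init x) ∧ ¬ IsRLL S' ℓ x} : ℝ)
          = (NC S' ℓ (ℓ+t) : ℝ) * Q := by exact_mod_cast hsplit
      have h2c : (Nat.card {x : Fin (ℓ+t+1) → σ // IsRLL S' ℓ (Fin.init x) ∧ ¬ IsRLL S' ℓ x} : ℝ)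
          ≤ (NC S' ℓ t : ℝ) * (((Q:ℝ) - R) * (R:ℝ)^ℓ) := by
        calc (Nat.card {x : Fin (ℓ+t+1) → σ // IsRLL S' ℓ (Fin.init x) ∧ ¬ IsRLL S' ℓ x} : ℝ)
            ≤ ((NC S' ℓ t * ((Q - R) * R^ℓ) : ℕ) : ℝ) := by exact_mod_cast hbadle
          _ = (NC S' ℓ t : ℝ) * (((Q:ℝ) - R) * (R:ℝ)^ℓ) := by
              push_cast [Nat.cast_sub hQR.le]; ring
      linarith
    rw [hF]
    dsimp only
    rw [le_div_iff₀ (hQpow (ℓ+t+1))]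
    have hexpand : ((NC S' ℓ (ℓ+t) : ℝ) / (Q:ℝ)^(ℓ+t) - p * ((NC S' ℓ t : ℝ) / (Q:ℝ)^t))
        * (Q:ℝ)^(ℓ+t+1)
        = (NC S' ℓ (ℓ+t) : ℝ) * Q - (NC S' ℓ t : ℝ) * (((Q:ℝ) - R) * (R:ℝ)^ℓ) := by
      rw [hp, div_pow]
      field_simp
      ring
    rw [hexpand]
    exact hC
  have hmain := rll_induction ℓ p p₁ (Real.exp (-(Real.exp 1 * p))) F hp0 hp₁1 hp₁0.le
    (Real.exp_pos _) (Real.exp_le_one_iff.mpr (by nlinarith))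
    hkey hF0 hF1 hFell hrec
  have hFn := hmain (n - ℓ)
  rw [show ℓ + (n - ℓ) = n from by omega] at hFn
  -- exp(-e p₁) ≤ 1 - p₁
  have hexp1 : Real.exp (-(Real.exp 1 * p₁)) ≤ 1 - p₁ := by
    have ha := Real.add_one_le_exp (Real.exp 1 * p₁)
    have hb : Real.exp (-(Real.exp 1 * p₁)) * (1 + Real.exp 1 * p₁) ≤ 1 := by
      calc Real.exp (-(Real.exp 1 * p₁)) * (1 + Real.exp 1 * p₁)
          ≤ Real.exp (-(Real.exp 1 * p₁)) * Real.exp (Real.exp 1 * p₁) :=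
            mul_le_mul_of_nonneg_left (by linarith) (Real.exp_pos _).le
        _ = 1 := by rw [← Real.exp_add]; simp
    have hc : 1 ≤ (1 - p₁) * (1 + Real.exp 1 * p₁) := by nlinarith
    exact le_of_mul_le_mul_right (le_trans hb hc) (by nlinarith)
  have hfinal : Real.exp (-(Real.exp 1) * (p₁ + ((n:ℝ) - (ℓ:ℝ)) * p)) ≤ F n := by
    have hmm : Real.exp (-(Real.exp 1) * (p₁ + ((n:ℝ) - (ℓ:ℝ)) * p))
        = Real.exp (-(Real.exp 1 * p₁)) * Real.exp (-(Real.exp 1 * p)) ^ (n - ℓ) := by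
      rw [← Real.exp_nat_mul, ← Real.exp_add]
      congr 1
      have : ((n - ℓ : ℕ) : ℝ) = (n:ℝ) - (ℓ:ℝ) := by
        push_cast [Nat.cast_sub hn]; ring
      rw [this]
      ring
    rw [hmm]
    calc Real.exp (-(Real.exp 1 * p₁)) * Real.exp (-(Real.exp 1 * p)) ^ (n - ℓ)
        ≤ (1 - p₁) * Real.exp (-(Real.exp 1 * p)) ^ (n - ℓ) :=
          mul_le_mul_of_nonneg_right hexp1 (pow_nonneg (Real.exp_pos _).le _)
      _ ≤ F n := hFn
  have hnc : ({x : Fin n → σ | IsRLL S' ℓ x}.ncard : ℕ) = NC S' ℓ n :=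
    (Nat.card_coe_set_eq _).symm
  have hconj1 : (Q:ℝ)^n * Real.exp (-(Real.exp 1) * (p₁ + ((n:ℝ) - (ℓ:ℝ)) * p))
      ≤ (NC S' ℓ n : ℝ) := by
    have h := hfinal
    rw [hF] at h
    dsimp only at h
    rw [le_div_iff₀ (hQpow n)] at h
    linarith
  constructor
  · rw [hnc]
    exact hconj1
  · rw [hnc]
    have hpos : (0:ℝ) < (Q:ℝ)^n * Real.exp (-(Real.exp 1) * (p₁ + ((n:ℝ) - (ℓ:ℝ)) * p)) := by
      positivity
    have hlogb := Real.logb_le_logb_of_le hQ1 hpos hconj1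
    have hlogQ : Real.log (Q:ℝ) ≠ 0 := ne_of_gt (Real.log_pos hQ1)
    have hcompute : Real.logb Q ((Q:ℝ)^n * Real.exp (-(Real.exp 1) * (p₁ + ((n:ℝ) - (ℓ:ℝ)) * p)))
        = (n:ℝ) + (-(Real.exp 1) * (p₁ + ((n:ℝ) - (ℓ:ℝ)) * p)) * Real.logb Q (Real.exp 1) := by
      rw [Real.logb_mul (by positivity) (by positivity)]
      congr 1
      · rw [Real.logb_pow, Real.logb_self_eq_one hQ1, mul_one]
      · simp only [Real.logb, Real.log_exp]
        ring
    have hrhs : Real.exp 1 * Real.logb Q (Real.exp 1) * ((R : ℝ) / Q) ^ ℓ *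
          (1 + (1 - (R : ℝ) / Q) * ((n : ℝ) - (ℓ : ℝ)))
        = (Real.exp 1 * (p₁ + ((n:ℝ) - (ℓ:ℝ)) * p)) * Real.logb Q (Real.exp 1) := by
      rw [hp, hp₁]
      ring
    rw [hrhs]
    rw [hcompute] at hlogb
    linarith
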